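/- Let n ≥ 2, 1 ≤ q < n/(n−1), and let μ be a vanishing logarithmic q-Carleson measure on the unit ball B of ℂⁿ. For r ∈ (0,1) define the cut-off measure dμ_r(z) = χ_{{|z| > r}}(z) dμ(z). Then ‖μ_r‖_{LCM_q} → 0 as r → 1⁻; more precisely, for every ε > 0 there exists r₀ ∈ (0,1) such that for all r > r₀, all ξ ∈ S, and all 0 < δ ≤ 2: μ_r(Q_δ(ξ)) ≤ C ε δ^{nq} (log(2/δ))^{−2} for a constant C independent of ε, r, ξ, δ. -/

import Mathlib

open MeasureTheory Metric Filter Set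
open scoped ENNReal Topology NNReal

noncomputable section

abbrev Cn (n : ℕ) := EuclideanSpace ℂ (Fin n)

instance (n : ℕ) : MeasurableSpace (Cn n) := borel _
instance (n : ℕ) : BorelSpace (Cn n) := ⟨rfl⟩

def herm {n : ℕ} (z w : Cn n) : ℂ := ∑ j, z j * (starRingEnd ℂ) (w j)

def ballB (n : ℕ) : Set (Cn n) := Metric.ball 0 1

def vMeas (n : ℕ) : Measure (Cn n) :=
  ((volume (ballB n))⁻¹ • (volume : Measure (Cn n))).restrict (ballB n)

def radialDeriv {n : ℕ} (f : Cn n → ℂ) (z : Cn n) : ℂ := fderiv ℂ f z z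

def moebFactor {n : ℕ} (a z : Cn n) : ℝ :=
  ((1 - ‖a‖ ^ 2) * (1 - ‖z‖ ^ 2)) / (‖1 - herm z a‖) ^ 2

def pseudoDist {n : ℕ} (z₁ z₂ : Cn n) : ℝ := Real.sqrt (1 - moebFactor z₁ z₂)

def qpIntegral {n : ℕ} (p : ℝ) (f : Cn n → ℂ) (a : Cn n) : ℝ≥0∞ :=
  ∫⁻ z in ballB n,
    ENNReal.ofReal ((‖radialDeriv f z‖) ^ 2 * (1 - ‖z‖ ^ 2) ^ 2 *
      moebFactor a z ^ ((n : ℝ) * p) * (1 - ‖z‖ ^ 2) ^ (-(n : ℝ) - 1)) ∂(vMeas n)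

def qpNorm {n : ℕ} (p : ℝ) (f : Cn n → ℂ) : ℝ≥0∞ :=
  ENNReal.ofReal (‖f 0‖) + (⨆ a ∈ ballB n, qpIntegral p f a) ^ (1/2 : ℝ)

def memQp {n : ℕ} (p : ℝ) (f : Cn n → ℂ) : Prop :=
  DifferentiableOn ℂ f (ballB n) ∧ qpNorm p f < ⊤

def Qbox {n : ℕ} (ξ : Cn n) (δ : ℝ) : Set (Cn n) :=
  {z ∈ ballB n | ‖1 - herm z ξ‖ < δ}

def logCMsq {n : ℕ} (q : ℝ) (μ : Measure (Cn n)) : ℝ≥0∞ :=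
  ⨆ (ξ : Cn n) (_ : ‖ξ‖ = 1) (δ : ℝ) (_ : 0 < δ),
    μ (Qbox ξ δ) * ENNReal.ofReal (δ ^ (-((n : ℝ) * q)) * Real.log (2 / δ) ^ 2)

def IsLogCarleson {n : ℕ} (q : ℝ) (μ : Measure (Cn n)) : Prop := logCMsq q μ < ⊤

def cmSq {n : ℕ} (p : ℝ) (μ : Measure (Cn n)) : ℝ≥0∞ :=
  ⨆ (ξ : Cn n) (_ : ‖ξ‖ = 1) (δ : ℝ) (_ : 0 < δ),
    μ (Qbox ξ δ) * ENNReal.ofReal (δ ^ (-((n : ℝ) * p)))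

def IsVanishingLogCarleson {n : ℕ} (q : ℝ) (μ : Measure (Cn n)) : Prop :=
  ∀ ε : ℝ, 0 < ε → ∃ δ₀ > (0:ℝ), ∀ ξ : Cn n, ‖ξ‖ = 1 → ∀ δ : ℝ, 0 < δ → δ < δ₀ →
    μ (Qbox ξ δ) * ENNReal.ofReal (δ ^ (-((n : ℝ) * q)) * Real.log (2 / δ) ^ 2)
      < ENNReal.ofReal ε

def tentNormSq {n : ℕ} (q : ℝ) (μ : Measure (Cn n)) (f : Cn n → ℂ) : ℝ≥0∞ :=
  ⨆ (ξ : Cn n) (_ : ‖ξ‖ = 1) (δ : ℝ) (_ : 0 < δ),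
    ENNReal.ofReal (δ ^ (-((n : ℝ) * q))) *
      ∫⁻ z in Qbox ξ δ, ENNReal.ofReal ((‖f z‖) ^ 2) ∂μ

def Tg {n : ℕ} (g f : Cn n → ℂ) (z : Cn n) : ℂ :=
  ∫ t in (0:ℝ)..1, f (t • z) * radialDeriv g (t • z) / (t : ℂ)

def Lg {n : ℕ} (g f : Cn n → ℂ) (z : Cn n) : ℂ :=
  ∫ t in (0:ℝ)..1, g (t • z) * radialDeriv f (t • z) / (t : ℂ)

def Mg {n : ℕ} (g f : Cn n → ℂ) (z : Cn n) : ℂ := g z * f z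

def muQG {n : ℕ} (q : ℝ) (g : Cn n → ℂ) : Measure (Cn n) :=
  (vMeas n).withDensity fun z =>
    ENNReal.ofReal ((‖radialDeriv g z‖) ^ 2 *
      (1 - ‖z‖ ^ 2) ^ ((n : ℝ) * (q - 1) + 1))

def BoundedQQ {n : ℕ} (p q : ℝ) (T : (Cn n → ℂ) → (Cn n → ℂ)) : Prop :=
  ∃ C : ℝ, 0 < C ∧ ∀ f : Cn n → ℂ, memQp p f →
    memQp q (T f) ∧ qpNorm q (T f) ≤ ENNReal.ofReal C * qpNorm p f

def CompactQQ {n : ℕ} (p q : ℝ) (T : (Cn n → ℂ) → (Cn n → ℂ)) : Prop :=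
  (∀ f : Cn n → ℂ, memQp p f → memQp q (T f)) ∧
  ∀ f : ℕ → (Cn n → ℂ), (∀ j, memQp p (f j)) → (∀ j, qpNorm p (f j) ≤ 1) →
    ∃ (h : Cn n → ℂ) (φ : ℕ → ℕ), StrictMono φ ∧ memQp q h ∧
      Tendsto (fun k => qpNorm q (fun z => T (f (φ k)) z - h z)) atTop (𝓝 0)

def blochNorm {n : ℕ} (f : Cn n → ℂ) : ℝ≥0∞ :=
  ENNReal.ofReal (‖f 0‖) +
    ⨆ z ∈ ballB n, ENNReal.ofReal (‖fderiv ℂ f z‖ * (1 - ‖z‖ ^ 2))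

def memBloch {n : ℕ} (f : Cn n → ℂ) : Prop :=
  DifferentiableOn ℂ f (ballB n) ∧ blochNorm f < ⊤

def BoundedBMOABloch {n : ℕ} (T : (Cn n → ℂ) → (Cn n → ℂ)) : Prop :=
  ∃ C : ℝ, 0 < C ∧ ∀ f : Cn n → ℂ, memQp 1 f →
    memBloch (T f) ∧ blochNorm (T f) ≤ ENNReal.ofReal C * qpNorm 1 f

def BoundedOnB {n : ℕ} (g : Cn n → ℂ) : Prop :=
  ∃ M : ℝ, ∀ z ∈ ballB n, ‖g z‖ ≤ M

def Qsphere {n : ℕ} (ξ : Cn n) (δ : ℝ) : Set (Cn n) :=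
  {η | ‖η‖ = 1 ∧ ‖1 - herm η ξ‖ < δ}

lemma herm_eq_inner {n : ℕ} (z w : Cn n) : herm z w = (inner ℂ w z : ℂ) := by
  simp [herm, PiLp.inner_apply, RCLike.inner_apply, mul_comm]

lemma abs_herm_le {n : ℕ} (z w : Cn n) : ‖herm z w‖ ≤ ‖w‖ * ‖z‖ := by
  rw [herm_eq_inner]
  exact (norm_inner_le_norm (𝕜 := ℂ) w z)

lemma herm_self_smul {n : ℕ} (z : Cn n) (hz : z ≠ 0) :
    herm z (‖z‖⁻¹ • z) = (‖z‖ : ℂ) := by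
  rw [herm_eq_inner]
  have hsm : (‖z‖⁻¹ : ℝ) • z = ((‖z‖⁻¹ : ℝ) : ℂ) • z := by
    norm_cast
  rw [hsm, inner_smul_left, inner_self_eq_norm_sq_to_K (𝕜 := ℂ)]
  have : (starRingEnd ℂ) ((‖z‖⁻¹ : ℝ) : ℂ) = ((‖z‖⁻¹ : ℝ) : ℂ) := by
    simp [Complex.conj_ofReal]
  push_cast [this]
  rw [map_inv₀, Complex.conj_ofReal]
  have hz' : (‖z‖ : ℂ) ≠ 0 := by
    simpa using norm_ne_zero_iff.mpr hz
  field_simp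
  rfl

/-- The cut-off estimate (3.4): for a vanishing logarithmic `q`-Carleson measure,
the cut-off measures have logarithmic Carleson norm tending to `0`. -/
theorem stmt18 {n : ℕ} (hn : 2 ≤ n) (q : ℝ)
    (hq1 : 1 ≤ q) (hq2 : q < (n : ℝ) / ((n : ℝ) - 1))
    (μ : Measure (Cn n)) (hμB : μ (ballB n)ᶜ = 0)
    (hμ : IsVanishingLogCarleson q μ) :
    ∃ C : ℝ, 0 < C ∧ ∀ ε : ℝ, 0 < ε → ∃ r₀ : ℝ, 0 < r₀ ∧ r₀ < 1 ∧
      ∀ r : ℝ, r₀ < r → r < 1 → ∀ ξ : Cn n, ‖ξ‖ = 1 → ∀ δ : ℝ, 0 < δ → δ ≤ 2 →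
        (μ.restrict {z : Cn n | r < ‖z‖}) (Qbox ξ δ) *
            ENNReal.ofReal (Real.log (2 / δ) ^ 2)
          ≤ ENNReal.ofReal (C * ε * δ ^ ((n : ℝ) * q)) := by
  refine ⟨1, one_pos, ?_⟩
  intro ε hε
  obtain ⟨δ₀, hδ₀, hvan⟩ := hμ ε hε
  set δ₁ := min δ₀ 1 with hδ₁def
  have hδ₁pos : 0 < δ₁ := lt_min hδ₀ one_pos
  have hδ₁le1 : δ₁ ≤ 1 := min_le_right _ _
  have hδ₁le : δ₁ ≤ δ₀ := min_le_left _ _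
  have hnq : (0:ℝ) ≤ (n:ℝ) * q := by positivity
  -- the shells
  set A : ℕ → Set (Cn n) := fun k => {z : Cn n | 1 - δ₁/8/(k+1) < ‖z‖} ∩ ballB n with hA
  have hAmeas : ∀ k, MeasurableSet (A k) := by
    intro k
    exact ((isOpen_lt continuous_const continuous_norm).inter Metric.isOpen_ball).measurableSet
  -- finiteness of small Carleson boxes
  have hQfin : ∀ ξ : Cn n, ‖ξ‖ = 1 → μ (Qbox ξ (δ₁/2)) ≠ ⊤ := by
    intro ξ hξ
    have h2 : δ₁/2 < δ₀ := by linarith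
    have h := hvan ξ hξ (δ₁/2) (by linarith) h2
    have hxpos : 0 < (δ₁/2) ^ (-((n : ℝ) * q)) * Real.log (2 / (δ₁/2)) ^ 2 := by
      have h4 : (1:ℝ) < 2 / (δ₁/2) := by
        rw [lt_div_iff₀ (by linarith)]
        linarith
      have := Real.log_pos h4
      positivity
    intro htop
    rw [htop, ENNReal.top_mul (ENNReal.ofReal_pos.mpr hxpos).ne'] at h
    exact (not_top_lt h)
  -- finiteness of shell measure via compactness cover
  have hfin : μ (A 0) ≠ ⊤ := by
    have hcomp : IsCompact (Metric.sphere (0 : Cn n) 1) := isCompact_sphere 0 1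
    have hcover : Metric.sphere (0 : Cn n) 1 ⊆
        ⋃ i : Metric.sphere (0 : Cn n) 1, Metric.ball (i : Cn n) (δ₁/8) := by
      intro ξ hξ
      rw [mem_iUnion]
      exact ⟨⟨ξ, hξ⟩, mem_ball_self (by linarith)⟩
    obtain ⟨t, ht⟩ := hcomp.elim_finite_subcover
      (fun i : Metric.sphere (0 : Cn n) 1 => Metric.ball (i : Cn n) (δ₁/8))
      (fun i => Metric.isOpen_ball) hcover
    have hsub : A 0 ⊆ ⋃ i ∈ t, Qbox (i : Cn n) (δ₁/2) := by
      intro z hz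
      obtain ⟨hz1, hz2⟩ := hz
      have hz1' : 1 - δ₁/8 < ‖z‖ := by
        have : δ₁/8/((0:ℕ)+1) = δ₁/8 := by norm_num
        simpa [this] using hz1
      have hzlt : ‖z‖ < 1 := by simpa [ballB] using hz2
      have hzpos : 0 < ‖z‖ := by nlinarith [hδ₁pos]
      have hzne : z ≠ 0 := norm_pos_iff.mp hzpos
      set η : Cn n := ‖z‖⁻¹ • z with hη
      have hηnorm : ‖η‖ = 1 := by
        rw [hη, norm_smul]
        simp [abs_of_pos (inv_pos.mpr hzpos), inv_mul_cancel₀ hzpos.ne']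
      have hηS : η ∈ Metric.sphere (0 : Cn n) 1 := by
        simpa [mem_sphere_zero_iff_norm] using hηnorm
      have := ht hηS
      rw [mem_iUnion] at this
      obtain ⟨i, hi⟩ := this
      rw [mem_iUnion] at hi
      obtain ⟨hit, hiball⟩ := hi
      refine mem_biUnion hit ?_
      refine ⟨hz2, ?_⟩
      have hd : ‖η - (i : Cn n)‖ < δ₁/8 := by
        have := mem_ball_iff_norm.mp hiball
        exact this
      have h1 : ‖1 - herm z η‖ < δ₁/8 := by
        rw [herm_self_smul z hzne]
        have : (1 : ℂ) - (‖z‖ : ℂ) = ((1 - ‖z‖ : ℝ) : ℂ) := by push_cast; ring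
        rw [this, Complex.norm_real, Real.norm_eq_abs, abs_of_pos (by linarith)]
        linarith
      have h2' : ‖herm z η - herm z (i : Cn n)‖ < δ₁/8 := by
        have heq : herm z η - herm z (i : Cn n) = herm z (η - (i : Cn n)) := by
          simp [herm, ← Finset.sum_sub_distrib, map_sub, mul_sub]
        rw [heq]
        calc ‖herm z (η - (i : Cn n))‖ ≤ ‖η - (i : Cn n)‖ * ‖z‖ :=
              abs_herm_le _ _
          _ ≤ ‖η - (i : Cn n)‖ * 1 := by
              exact mul_le_mul_of_nonneg_left hzlt.le (norm_nonneg _)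
          _ < δ₁/8 := by rw [mul_one]; exact hd
      calc ‖1 - herm z (i : Cn n)‖
          ≤ ‖1 - herm z η‖ + ‖herm z η - herm z (i : Cn n)‖ := by
            have : (1 : ℂ) - herm z (i : Cn n) =
                (1 - herm z η) + (herm z η - herm z (i : Cn n)) := by ring
            rw [this]; exact norm_add_le _ _
        _ < δ₁/8 + δ₁/8 := by linarith
        _ < δ₁/2 := by linarith
    have hle : μ (A 0) ≤ ∑ i ∈ t, μ (Qbox (i : Cn n) (δ₁/2)) :=
      le_trans (measure_mono hsub) (measure_biUnion_finset_le t _)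
    intro htop
    rw [htop] at hle
    have : ∑ i ∈ t, μ (Qbox (i : Cn n) (δ₁/2)) ≠ ⊤ := by
      refine ENNReal.sum_ne_top.mpr ?_
      intro i _
      exact hQfin (i : Cn n) (by simpa [mem_sphere_zero_iff_norm] using i.2)
    exact this (top_le_iff.mp hle)
  -- continuity from above
  have hanti : Antitone A := by
    intro j k hjk z hz
    obtain ⟨hz1, hz2⟩ := hz
    refine ⟨?_, hz2⟩
    have h1 : δ₁/8/(k+1) ≤ δ₁/8/(j+1) := by
      apply div_le_div_of_nonneg_left (by linarith) (by positivity)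
      exact_mod_cast Nat.succ_le_succ hjk
    simp only [mem_setOf_eq] at hz1 ⊢
    linarith
  have hiInter : ⋂ k, A k = ∅ := by
    ext z
    simp only [mem_iInter, mem_empty_iff_false, iff_false]
    intro h
    obtain ⟨_, hz2⟩ := h 0
    have hzlt : ‖z‖ < 1 := by simpa [ballB] using hz2
    obtain ⟨k, hk⟩ := exists_nat_gt (δ₁/8/(1 - ‖z‖))
    obtain ⟨hz1, _⟩ := h k
    simp only [mem_setOf_eq] at hz1
    have hkpos : (0:ℝ) < (k:ℝ) + 1 := by positivity
    have : δ₁/8/((k:ℝ)+1) < 1 - ‖z‖ := by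
      rw [div_lt_iff₀ hkpos]
      have h2 : δ₁/8 < (1 - ‖z‖) * ((k:ℝ)+1) := by
        have := (div_lt_iff₀ (by linarith : (0:ℝ) < 1 - ‖z‖)).mp hk
        nlinarith [hδ₁pos]
      linarith
    linarith
  have htend : Tendsto (fun k => μ (A k)) atTop (𝓝 0) := by
    have := MeasureTheory.tendsto_measure_iInter_atTop (μ := μ) (s := A)
      (fun k => (hAmeas k).nullMeasurableSet) hanti ⟨0, hfin⟩
    rwa [hiInter, measure_empty] at this
  -- choose k
  have hL : 0 < Real.log (2/δ₁) := Real.log_pos (by rw [lt_div_iff₀ hδ₁pos]; linarith)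
  set T := ε * δ₁ ^ ((n:ℝ)*q) / (Real.log (2/δ₁))^2 with hT
  have hTpos : 0 < T := by
    have := Real.rpow_pos_of_pos hδ₁pos ((n:ℝ)*q)
    positivity
  obtain ⟨k, hk⟩ : ∃ k, μ (A k) < ENNReal.ofReal T :=
    (htend.eventually (gt_mem_nhds (ENNReal.ofReal_pos.mpr hTpos))).exists
  have hc1 : δ₁/8/((k:ℝ)+1) ≤ δ₁/8 := by
    apply div_le_of_le_mul₀ (by positivity) (by positivity)
    nlinarith [hδ₁pos, (Nat.cast_nonneg k : (0:ℝ) ≤ k)]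
  refine ⟨1 - δ₁/8/(k+1), by nlinarith [hδ₁pos], by
    have : (0:ℝ) < δ₁/8/((k:ℝ)+1) := by positivity
    linarith, ?_⟩
  intro r hr hr1 ξ hξ δ hδ hδ2
  have hmeasr : MeasurableSet {z : Cn n | r < ‖z‖} :=
    (isOpen_lt continuous_const continuous_norm).measurableSet
  rw [Measure.restrict_apply' hmeasr]
  rcases lt_or_ge δ δ₁ with hcase | hcase
  · -- small δ : use vanishing hypothesis directly
    have h1 := hvan ξ hξ δ hδ (lt_of_lt_of_le hcase hδ₁le)
    have hmono : μ (Qbox ξ δ ∩ {z : Cn n | r < ‖z‖}) ≤ μ (Qbox ξ δ) :=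
      measure_mono inter_subset_left
    have hfac : ENNReal.ofReal (Real.log (2/δ) ^ 2)
        = ENNReal.ofReal (δ ^ (-((n : ℝ) * q)) * Real.log (2 / δ) ^ 2) *
          ENNReal.ofReal (δ ^ ((n:ℝ)*q)) := by
      rw [← ENNReal.ofReal_mul (by positivity)]
      congr 1
      rw [Real.rpow_neg hδ.le]
      field_simp
    calc μ (Qbox ξ δ ∩ {z : Cn n | r < ‖z‖}) * ENNReal.ofReal (Real.log (2/δ) ^ 2)
        ≤ μ (Qbox ξ δ) * (ENNReal.ofReal (δ ^ (-((n : ℝ) * q)) * Real.log (2 / δ) ^ 2) *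
            ENNReal.ofReal (δ ^ ((n:ℝ)*q))) := by
          rw [← hfac]; exact mul_le_mul_left hmono _
      _ = (μ (Qbox ξ δ) * ENNReal.ofReal (δ ^ (-((n : ℝ) * q)) * Real.log (2 / δ) ^ 2)) *
            ENNReal.ofReal (δ ^ ((n:ℝ)*q)) := by ring
      _ ≤ ENNReal.ofReal ε * ENNReal.ofReal (δ ^ ((n:ℝ)*q)) :=
          mul_le_mul_left h1.le _
      _ = ENNReal.ofReal (1 * ε * δ ^ ((n:ℝ)*q)) := by
          rw [← ENNReal.ofReal_mul hε.le]; ring_nf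
  · -- large δ : use the shell bound
    have hsub2 : Qbox ξ δ ∩ {z : Cn n | r < ‖z‖} ⊆ A k := by
      intro z hz
      obtain ⟨hzQ, hzr⟩ := hz
      exact ⟨by simp only [mem_setOf_eq] at hzr ⊢; linarith, hzQ.1⟩
    have hμr : μ (Qbox ξ δ ∩ {z : Cn n | r < ‖z‖}) ≤ ENNReal.ofReal T :=
      le_trans (measure_mono hsub2) hk.le
    have hlog : Real.log (2/δ) ^ 2 ≤ Real.log (2/δ₁) ^ 2 := by
      have h0 : (0:ℝ) ≤ Real.log (2/δ) := by
        apply Real.log_nonneg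
        rw [le_div_iff₀ hδ]; linarith
      have hle : Real.log (2/δ) ≤ Real.log (2/δ₁) := by
        apply Real.log_le_log (by positivity)
        apply div_le_div_of_nonneg_left (by norm_num) hδ₁pos hcase
      exact pow_le_pow_left₀ h0 hle 2
    calc μ (Qbox ξ δ ∩ {z : Cn n | r < ‖z‖}) * ENNReal.ofReal (Real.log (2/δ) ^ 2)
        ≤ ENNReal.ofReal T * ENNReal.ofReal (Real.log (2/δ₁) ^ 2) :=
          mul_le_mul' hμr (ENNReal.ofReal_le_ofReal hlog)
      _ = ENNReal.ofReal (T * Real.log (2/δ₁) ^ 2) := by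
          rw [← ENNReal.ofReal_mul hTpos.le]
      _ = ENNReal.ofReal (ε * δ₁ ^ ((n:ℝ)*q)) := by
          congr 1
          rw [hT]
          field_simp
      _ ≤ ENNReal.ofReal (1 * ε * δ ^ ((n:ℝ)*q)) := by
          apply ENNReal.ofReal_le_ofReal
          rw [one_mul]
          apply mul_le_mul_of_nonneg_left ?_ hε.le
          exact Real.rpow_le_rpow hδ₁pos.le hcase hnq


end
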